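/- arXiv:2510.02092 — 3 statements merged into one kernel-verified Lean document; each statement's English description precedes it below -/
import Mathlib

section
/- For all real numbers u, v, every t ∈ [0,1], and every L > 0: |sin( (π/L)·( (tL/(2π))·sin(2πu/L) − (tL/(2π))·sin(2πv/L) ) )| ≤ |sin(π(u−v)/L)|. -/
theorem sin_interp_bound (u v t L : ℝ) (ht : t ∈ Set.Icc (0:ℝ) 1) (hL : 0 < L) :
    |Real.sin (Real.pi / L * (t * L / (2 * Real.pi) * Real.sin (2 * Real.pi * u / L)
        - t * L / (2 * Real.pi) * Real.sin (2 * Real.pi * v / L)))|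
      ≤ |Real.sin (Real.pi * (u - v) / L)| := by
  obtain ⟨ht0, ht1⟩ := ht
  have hπ := Real.pi_pos
  have key : Real.pi / L * (t * L / (2 * Real.pi) * Real.sin (2 * Real.pi * u / L)
        - t * L / (2 * Real.pi) * Real.sin (2 * Real.pi * v / L))
      = t * Real.sin (Real.pi * (u - v) / L) * Real.cos (Real.pi * (u + v) / L) := by
    rw [← mul_sub, Real.sin_sub_sin,
      show (2 * Real.pi * u / L - 2 * Real.pi * v / L) / 2 = Real.pi * (u - v) / L by
        field_simp,
      show (2 * Real.pi * u / L + 2 * Real.pi * v / L) / 2 = Real.pi * (u + v) / L by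
        field_simp]
    field_simp
  rw [key]
  calc |Real.sin (t * Real.sin (Real.pi * (u - v) / L) * Real.cos (Real.pi * (u + v) / L))|
      ≤ |t * Real.sin (Real.pi * (u - v) / L) * Real.cos (Real.pi * (u + v) / L)| :=
        Real.abs_sin_le_abs
    _ = |t| * |Real.sin (Real.pi * (u - v) / L)| * |Real.cos (Real.pi * (u + v) / L)| := by
        rw [abs_mul, abs_mul]
    _ ≤ 1 * |Real.sin (Real.pi * (u - v) / L)| * 1 := by
        gcongr
        · exact abs_le.2 ⟨by linarith, ht1⟩
        · exact Real.abs_cos_le_one _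
    _ = |Real.sin (Real.pi * (u - v) / L)| := by ring
end

section
/- Let |·|_L be the norm on ℝ⁴ defined by |a|_L = (L/π)·( Σ_{j=1}^{4} sin²(π a_j / L) )^{1/2}, and for a ∈ ℝ⁴ let (a)_T = (L/(2π))·(sin(2π a₁/L), …, sin(2π a₄/L)). Then for all x, y ∈ ℝ⁴ and t ∈ [0,1]: |t·(x)_T − t·(y)_T|_L ≤ |x − y|_L. -/
/-- The periodic norm `|a|_L = (L/π)·(Σ_j sin²(π a_j/L))^{1/2}` on `ℝ⁴`. -/
noncomputable def normL (L : ℝ) (a : Fin 4 → ℝ) : ℝ :=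
  L / Real.pi * Real.sqrt (∑ j, Real.sin (Real.pi * a j / L) ^ 2)

/-- The torus periodization `(a)_T = (L/(2π))·(sin(2π a_j/L))_j`. -/
noncomputable def torusVec (L : ℝ) (a : Fin 4 → ℝ) : Fin 4 → ℝ :=
  fun j => L / (2 * Real.pi) * Real.sin (2 * Real.pi * a j / L)

theorem torus_contraction (L : ℝ) (hL : 0 < L) (x y : Fin 4 → ℝ) (t : ℝ)
    (ht : t ∈ Set.Icc (0:ℝ) 1) :
    normL L (t • torusVec L x - t • torusVec L y) ≤ normL L (x - y) := by
  obtain ⟨ht0, ht1⟩ := ht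
  have hπ : (0:ℝ) < Real.pi := Real.pi_pos
  have hL0 : L ≠ 0 := hL.ne'
  have hπ0 : Real.pi ≠ 0 := hπ.ne'
  unfold normL
  apply mul_le_mul_of_nonneg_left _ (by positivity)
  apply Real.sqrt_le_sqrt
  apply Finset.sum_le_sum
  intro j _
  have key : Real.pi * (t • torusVec L x - t • torusVec L y) j / L
      = t * Real.sin (Real.pi * x j / L - Real.pi * y j / L)
          * Real.cos (Real.pi * x j / L + Real.pi * y j / L) := by
    simp only [Pi.sub_apply, Pi.smul_apply, torusVec, smul_eq_mul]
    have h2x : 2 * Real.pi * x j / L = 2 * (Real.pi * x j / L) := by ring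
    have h2y : 2 * Real.pi * y j / L = 2 * (Real.pi * y j / L) := by ring
    rw [h2x, h2y]
    rw [show t * (L / (2 * Real.pi) * Real.sin (2 * (Real.pi * x j / L)))
        - t * (L / (2 * Real.pi) * Real.sin (2 * (Real.pi * y j / L)))
        = t * (L / (2 * Real.pi)) * (Real.sin (2 * (Real.pi * x j / L))
          - Real.sin (2 * (Real.pi * y j / L))) by ring]
    rw [Real.sin_sub_sin]
    have e1 : (2 * (Real.pi * x j / L) - 2 * (Real.pi * y j / L)) / 2
        = Real.pi * x j / L - Real.pi * y j / L := by ring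
    have e2 : (2 * (Real.pi * x j / L) + 2 * (Real.pi * y j / L)) / 2
        = Real.pi * x j / L + Real.pi * y j / L := by ring
    rw [e1, e2]
    field_simp
  rw [key]
  calc Real.sin (t * Real.sin (Real.pi * x j / L - Real.pi * y j / L)
          * Real.cos (Real.pi * x j / L + Real.pi * y j / L)) ^ 2
      ≤ (t * Real.sin (Real.pi * x j / L - Real.pi * y j / L)
          * Real.cos (Real.pi * x j / L + Real.pi * y j / L)) ^ 2 :=
        Real.sin_sq_le_sq
    _ ≤ Real.sin (Real.pi * x j / L - Real.pi * y j / L) ^ 2 := by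
        have h1 : t ^ 2 ≤ 1 := by nlinarith
        have h2 : Real.cos (Real.pi * x j / L + Real.pi * y j / L) ^ 2 ≤ 1 :=
          Real.cos_sq_le_one _
        nlinarith [sq_nonneg (Real.sin (Real.pi * x j / L - Real.pi * y j / L)),
          sq_nonneg t, sq_nonneg (Real.cos (Real.pi * x j / L + Real.pi * y j / L)),
          sq_nonneg (t * Real.sin (Real.pi * x j / L - Real.pi * y j / L))]
    _ = Real.sin (Real.pi * (x - y) j / L) ^ 2 := by
        congr 1
        · congr 1
          simp [Pi.sub_apply]
          ring
end

section
/- Let f: ℝ⁴ → ℂ be measurable with |f(q)| ≤ K/|q|⁴ for |q| ≥ 1, let χ: ℝ⁴ → [0,1] be Lipschitz with Lipschitz constant ≤ M·2^{−N}, supported in {|q| ≤ 2^{N+1}} and equal to 1 on {|q| ≤ 2^N}, and let c ∈ ℝ⁴ be fixed. Then ∫_{ℝ⁴} |f(q)| · |χ(q + c) − χ(q)| dq ≤ C(K, M, |c|) · 2^{−N}, where the constant C does not depend on N (for N large enough that 2^{N−1} ≥ |c| + 1). -/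
open MeasureTheory Metric

theorem cutoff_recentering (K M : ℝ) (hK : 0 < K) (hM : 0 < M)
    (c : EuclideanSpace ℝ (Fin 4)) :
    ∃ C : ℝ, 0 < C ∧ ∀ N : ℕ, (2:ℝ) ^ ((N : ℤ) - 1) ≥ ‖c‖ + 1 →
      ∀ f : EuclideanSpace ℝ (Fin 4) → ℂ, Measurable f →
        (∀ q : EuclideanSpace ℝ (Fin 4), 1 ≤ ‖q‖ → ‖f q‖ ≤ K / ‖q‖ ^ 4) →
      ∀ χ : EuclideanSpace ℝ (Fin 4) → ℝ,
        (∀ q, χ q ∈ Set.Icc (0:ℝ) 1) →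
        (∀ q q', |χ q - χ q'| ≤ M * (2:ℝ) ^ (-(N : ℤ)) * ‖q - q'‖) →
        (∀ q : EuclideanSpace ℝ (Fin 4), (2:ℝ) ^ (N + 1) < ‖q‖ → χ q = 0) →
        (∀ q : EuclideanSpace ℝ (Fin 4), ‖q‖ ≤ (2:ℝ) ^ N → χ q = 1) →
        ∫ q : EuclideanSpace ℝ (Fin 4), ‖f q‖ * |χ (q + c) - χ q|
          ≤ C * (2:ℝ) ^ (-(N : ℤ)) := by
  have hVfin : volume (ball (0 : EuclideanSpace ℝ (Fin 4)) 1) < ⊤ :=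
    measure_ball_lt_top
  have hVpos : 0 < volume (ball (0 : EuclideanSpace ℝ (Fin 4)) 1) :=
    measure_ball_pos _ _ one_pos
  set V : ℝ := (volume (ball (0 : EuclideanSpace ℝ (Fin 4)) 1)).toReal with hVdef
  have hV : 0 < V := ENNReal.toReal_pos hVpos.ne' hVfin.ne
  refine ⟨4096 * K * M * (‖c‖ + 1) * V + 1, by positivity, ?_⟩
  intro N hN f hfm hfb χ hχ01 hχlip hχ0 hχ1
  set P : ℝ := (2:ℝ) ^ N with hPdef
  have hP : 0 < P := by positivity
  have hsub : (2:ℝ) ^ ((N:ℤ) - 1) = P / 2 := by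
    rw [zpow_sub₀ (two_ne_zero), zpow_natCast, zpow_one]
  have hc : ‖c‖ + 1 ≤ P / 2 := by rw [← hsub]; exact hN
  have hnegN : (2:ℝ) ^ (-(N:ℤ)) = P⁻¹ := by
    rw [zpow_neg, zpow_natCast]
  set A : ℝ := (K / (P/2)^4) * (M * P⁻¹ * ‖c‖) with hAdef
  have hA0 : 0 ≤ A := by positivity
  set R : ℝ := 4 * P with hRdef
  have hcn : (0:ℝ) ≤ ‖c‖ := norm_nonneg c
  have key : ∀ q : EuclideanSpace ℝ (Fin 4),
      ‖f q‖ * |χ (q + c) - χ q|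
        ≤ (closedBall (0 : EuclideanSpace ℝ (Fin 4)) R).indicator (fun _ => A) q := by
    intro q
    by_cases hq : q ∈ closedBall (0 : EuclideanSpace ℝ (Fin 4)) R
    · rw [Set.indicator_of_mem hq]
      by_cases hsmall : ‖q‖ < P - ‖c‖
      · have h1 : χ q = 1 := hχ1 q (by linarith)
        have h2 : χ (q + c) = 1 := hχ1 _ (by
          calc ‖q + c‖ ≤ ‖q‖ + ‖c‖ := norm_add_le _ _
          _ ≤ P := by linarith)
        simp [h1, h2, hA0]
      · push_neg at hsmall
        have hq1 : P / 2 ≤ ‖q‖ := by linarith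
        have hlip := hχlip (q + c) q
        rw [add_sub_cancel_left, hnegN] at hlip
        have hf1 : ‖f q‖ ≤ K / ‖q‖ ^ 4 := hfb q (by linarith)
        have h4 : (P/2)^4 ≤ ‖q‖^4 := pow_le_pow_left₀ (by positivity) hq1 4
        have hfq : ‖f q‖ ≤ K / (P/2)^4 :=
          hf1.trans (div_le_div_of_nonneg_left hK.le (by positivity) h4)
        calc ‖f q‖ * |χ (q + c) - χ q| ≤ (K / (P/2)^4) * (M * P⁻¹ * ‖c‖) :=
              mul_le_mul hfq hlip (abs_nonneg _) (by positivity)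
        _ = A := rfl
    · rw [Set.indicator_of_notMem hq]
      simp only [mem_closedBall, dist_zero_right, not_le] at hq
      have h2N1 : (2:ℝ)^(N+1) = 2 * P := by rw [hPdef, pow_succ]; ring
      have h1 : χ q = 0 := hχ0 q (by rw [h2N1]; linarith)
      have h2 : χ (q + c) = 0 := hχ0 _ (by
        rw [h2N1]
        have hqc : ‖q‖ ≤ ‖q + c‖ + ‖c‖ := by
          calc ‖q‖ = ‖q + c - c‖ := by rw [add_sub_cancel_right]
          _ ≤ ‖q + c‖ + ‖c‖ := norm_sub_le _ _
        linarith)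
      simp [h1, h2]
  have hmeas : MeasurableSet (closedBall (0 : EuclideanSpace ℝ (Fin 4)) R) :=
    measurableSet_closedBall
  have hint : Integrable
      ((closedBall (0 : EuclideanSpace ℝ (Fin 4)) R).indicator (fun _ => A)) volume :=
    (integrableOn_const measure_closedBall_lt_top.ne).integrable_indicator hmeas
  have hle : ∫ q : EuclideanSpace ℝ (Fin 4), ‖f q‖ * |χ (q + c) - χ q|
      ≤ ∫ q : EuclideanSpace ℝ (Fin 4),
          (closedBall (0 : EuclideanSpace ℝ (Fin 4)) R).indicator (fun _ => A) q :=
    integral_mono_of_nonneg (ae_of_all _ fun q => by positivity) hint (ae_of_all _ key)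
  rw [integral_indicator_const _ hmeas] at hle
  have hR0 : (0:ℝ) ≤ R := by positivity
  have hvol : (volume (closedBall (0 : EuclideanSpace ℝ (Fin 4)) R)).toReal = R ^ 4 * V := by
    rw [Measure.addHaar_closedBall _ _ hR0]
    rw [ENNReal.toReal_mul, ENNReal.toReal_ofReal (by positivity)]
    norm_num [hVdef]
  rw [measureReal_def, hvol, smul_eq_mul] at hle
  refine hle.trans ?_
  rw [hnegN]
  have heq : R ^ 4 * V * A = 4096 * K * M * ‖c‖ * V * P⁻¹ := by
    rw [hAdef, hRdef]
    field_simp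
    ring
  rw [heq]
  have h1 : 4096 * K * M * ‖c‖ * V ≤ 4096 * K * M * (‖c‖ + 1) * V + 1 := by
    nlinarith [mul_pos (mul_pos hK hM) hV]
  have hPinv : (0:ℝ) < P⁻¹ := by positivity
  exact mul_le_mul_of_nonneg_right h1 hPinv.le
end
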